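/- Let 0 < μ ≤ L, let F : ℝ^d → ℝ^d be μ-strongly monotone and L-Lipschitz, and let z* ∈ ℝ^d satisfy F(z*) = 0. Let 0 < e ≤ Γ and 0 < γ ≤ e/(4L). Let V̂ and V̂' be symmetric positive definite d×d matrices with e·I ≼ V̂ ≼ Γ·I, and suppose V̂' ≼ (1 + δ)·V̂ for some δ ≥ 0. Given z_t ∈ ℝ^d, define z_{t+1/2} = z_t − γ·V̂⁻¹F(z_t) and z_{t+1} = z_t − γ·V̂⁻¹F(z_{t+1/2}). Then ‖z_{t+1} − z*‖²_{V̂'} ≤ (1 − γμ/Γ)·(1 + δ)·‖z_t − z*‖²_{V̂}. -/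

import Mathlib

open RealInnerProductSpace

lemma psd_inner_nonneg {d : ℕ} (P : Matrix (Fin d) (Fin d) ℝ) (hP : P.PosSemidef)
    (x : EuclideanSpace ℝ (Fin d)) : 0 ≤ ⟪x, Matrix.toEuclideanLin P x⟫ := by
  have h := hP.dotProduct_mulVec_nonneg ((WithLp.equiv 2 _) x)
  simpa [EuclideanSpace.inner_eq_star_dotProduct, Matrix.toEuclideanLin_apply, dotProduct_comm] using h

lemma toEuclideanLin_one' {d : ℕ} (x : EuclideanSpace ℝ (Fin d)) :
    Matrix.toEuclideanLin (1 : Matrix (Fin d) (Fin d) ℝ) x = x := by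
  rw [Matrix.toEuclideanLin_apply, Matrix.one_mulVec]

lemma sub_smul_inner {d : ℕ} (P : Matrix (Fin d) (Fin d) ℝ) (c : ℝ)
    (x : EuclideanSpace ℝ (Fin d)) :
    ⟪x, Matrix.toEuclideanLin (P - c • (1 : Matrix (Fin d) (Fin d) ℝ)) x⟫
      = ⟪x, Matrix.toEuclideanLin P x⟫ - c * ‖x‖ ^ 2 := by
  rw [map_sub, map_smul, LinearMap.sub_apply, LinearMap.smul_apply, inner_sub_right,
    toEuclideanLin_one', real_inner_smul_right, real_inner_self_eq_norm_sq]

lemma smul_sub_inner {d : ℕ} (P Q : Matrix (Fin d) (Fin d) ℝ) (c : ℝ)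
    (x : EuclideanSpace ℝ (Fin d)) :
    ⟪x, Matrix.toEuclideanLin (c • P - Q) x⟫
      = c * ⟪x, Matrix.toEuclideanLin P x⟫ - ⟪x, Matrix.toEuclideanLin Q x⟫ := by
  have h : Matrix.toEuclideanLin (c • P - Q)
      = c • Matrix.toEuclideanLin P - Matrix.toEuclideanLin Q := by
    rw [map_sub, map_smul]
  rw [h, LinearMap.sub_apply, LinearMap.smul_apply, inner_sub_right, real_inner_smul_right]

lemma inner_quad {d : ℕ} (V : Matrix (Fin d) (Fin d) ℝ) (hVsymm : V.IsHermitian)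
    (r w g : EuclideanSpace ℝ (Fin d)) (γ : ℝ) (hg : Matrix.toEuclideanLin V w = g) :
    ⟪r - γ • w, Matrix.toEuclideanLin V (r - γ • w)⟫
      = ⟪r, Matrix.toEuclideanLin V r⟫ - 2*γ*⟪g, r⟫ + γ^2 * ⟪g, w⟫ := by
  have hs := (Matrix.isHermitian_iff_isSymmetric.mp hVsymm)
  have h1 : ⟪w, Matrix.toEuclideanLin V r⟫ = ⟪g, r⟫ := by rw [← hs w r, hg]
  rw [map_sub, map_smul, hg, inner_sub_left, inner_sub_right,
    inner_sub_right, real_inner_smul_left, real_inner_smul_left, real_inner_smul_right,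
    real_inner_smul_right, h1, real_inner_comm r g, real_inner_comm w g]
  ring

set_option maxHeartbeats 1000000 in
theorem scaled_extragradient_strongly_monotone_contraction
    (d : ℕ) (μ L : ℝ) (hμ : 0 < μ) (hμL : μ ≤ L)
    (F : EuclideanSpace ℝ (Fin d) → EuclideanSpace ℝ (Fin d))
    (hFmono : ∀ z₁ z₂, μ * ‖z₁ - z₂‖ ^ 2 ≤ ⟪F z₁ - F z₂, z₁ - z₂⟫)
    (hFlip : ∀ z₁ z₂, ‖F z₁ - F z₂‖ ≤ L * ‖z₁ - z₂‖)
    (zstar : EuclideanSpace ℝ (Fin d)) (hzstar : F zstar = 0)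
    (e Γ γ δ : ℝ) (he : 0 < e) (heΓ : e ≤ Γ)
    (hγ0 : 0 < γ) (hγ : γ ≤ e / (4 * L)) (hδ : 0 ≤ δ)
    (V V' : Matrix (Fin d) (Fin d) ℝ)
    (hVsymm : V.IsHermitian) (hV'symm : V'.IsHermitian)
    (hVpd : V.PosDef) (hV'pd : V'.PosDef)
    (hVe : (V - e • (1 : Matrix (Fin d) (Fin d) ℝ)).PosSemidef)
    (hVΓ : (Γ • (1 : Matrix (Fin d) (Fin d) ℝ) - V).PosSemidef)
    (hgrow : ((1 + δ) • V - V').PosSemidef)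
    (zt zth zt1 : EuclideanSpace ℝ (Fin d))
    (hzth : zth = zt - γ • (Matrix.toEuclideanLin V⁻¹) (F zt))
    (hzt1 : zt1 = zt - γ • (Matrix.toEuclideanLin V⁻¹) (F zth)) :
    ⟪zt1 - zstar, (Matrix.toEuclideanLin V') (zt1 - zstar)⟫ ≤
      (1 - γ * μ / Γ) * (1 + δ) *
        ⟪zt - zstar, (Matrix.toEuclideanLin V) (zt - zstar)⟫ := by
  have hL : 0 < L := lt_of_lt_of_le hμ hμL
  have hΓ : 0 < Γ := lt_of_lt_of_le he heΓ
  have hLγ : γ * L ≤ e / 4 := by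
    have h := (le_div_iff₀ (by positivity : (0:ℝ) < 4 * L)).mp hγ
    linarith
  have hVV : V * V⁻¹ = 1 := Matrix.mul_nonsing_inv V hVpd.det_pos.ne'.isUnit
  have hMB : ∀ u : EuclideanSpace ℝ (Fin d),
      Matrix.toEuclideanLin V (Matrix.toEuclideanLin V⁻¹ u) = u := by
    intro u
    simp [Matrix.toEuclideanLin_apply, Matrix.mulVec_mulVec, hVV, Matrix.one_mulVec]
  have hBsym := (Matrix.isHermitian_iff_isSymmetric.mp hVpd.isHermitian.inv :
    LinearMap.IsSymmetric (Matrix.toEuclideanLin V⁻¹))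
  set B := Matrix.toEuclideanLin V⁻¹ with hBdef
  set r := zt - zstar with hrdef
  have hth : zth - zstar = r - γ • B (F zt) := by rw [hzth, sub_right_comm]
  have ht1 : zt1 - zstar = r - γ • B (F zth) := by rw [hzt1, sub_right_comm]
  have key_e : ∀ u : EuclideanSpace ℝ (Fin d), e * ‖B u‖ ^ 2 ≤ ⟪u, B u⟫ := by
    intro u
    have h0 := psd_inner_nonneg _ hVe (B u)
    rw [sub_smul_inner, hMB u, real_inner_comm] at h0
    linarith
  have key_CS : ∀ u : EuclideanSpace ℝ (Fin d), ⟪u, B u⟫ ≤ ‖u‖ * ‖B u‖ :=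
    fun u => real_inner_le_norm u (B u)
  have hBub : ∀ u : EuclideanSpace ℝ (Fin d), e * ⟪u, B u⟫ ≤ ‖u‖ ^ 2 := by
    intro u
    nlinarith [key_e u, key_CS u, norm_nonneg (B u), norm_nonneg u,
      sq_nonneg (‖u‖ - e * ‖B u‖)]
  have hBn : ∀ u : EuclideanSpace ℝ (Fin d), e * ‖B u‖ ≤ ‖u‖ := by
    intro u
    rcases eq_or_lt_of_le (norm_nonneg (B u)) with h | h
    · rw [← h]; simpa using norm_nonneg u
    · nlinarith [(key_e u).trans (key_CS u)]
  have hg1 : ‖F zt‖ ≤ L * ‖r‖ := by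
    have h := hFlip zt zstar; rwa [hzstar, sub_zero] at h
  have hΔ : ‖F zth - F zt‖ ≤ L * (γ * ‖B (F zt)‖) := by
    have h := hFlip zth zt
    have h2 : zth - zt = -(γ • B (F zt)) := by rw [hzth]; abel
    rw [h2, norm_neg, norm_smul, Real.norm_eq_abs, abs_of_pos hγ0] at h
    exact h
  have hmono : μ * ‖zth - zstar‖ ^ 2 ≤ ⟪F zth, zth - zstar⟫ := by
    have h := hFmono zth zstar; rwa [hzstar, sub_zero] at h
  have hA : ⟪zt1 - zstar, Matrix.toEuclideanLin V (zt1 - zstar)⟫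
      = ⟪r, Matrix.toEuclideanLin V r⟫ - 2*γ*⟪F zth, r⟫ + γ^2 * ⟪F zth, B (F zth)⟫ := by
    rw [ht1]; exact inner_quad V hVsymm r (B (F zth)) (F zth) γ (hMB _)
  have hB' : ⟪F zth, r⟫ = ⟪F zth, zth - zstar⟫ + γ * ⟪F zth, B (F zt)⟫ := by
    have h : r = (zth - zstar) + γ • B (F zt) := by rw [hth]; abel
    rw [h, inner_add_right, real_inner_smul_right]
  have hcross : ⟪F zt, B (F zth)⟫ = ⟪F zth, B (F zt)⟫ := by
    rw [← hBsym (F zt) (F zth), real_inner_comm]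
  have hD : ⟪F zth - F zt, B (F zth - F zt)⟫
      = ⟪F zth, B (F zth)⟫ - 2*⟪F zth, B (F zt)⟫ + ⟪F zt, B (F zt)⟫ := by
    rw [map_sub, inner_sub_left, inner_sub_right, inner_sub_right, hcross]; ring
  have hP11 : 0 ≤ ⟪F zt, B (F zt)⟫ := psd_inner_nonneg _ hVpd.inv.posSemidef (F zt)
  have hΓr : ⟪r, Matrix.toEuclideanLin V r⟫ ≤ Γ * ‖r‖ ^ 2 := by
    have h := psd_inner_nonneg _ hVΓ r
    rw [← neg_sub V (Γ • (1 : Matrix (Fin d) (Fin d) ℝ)), map_neg, LinearMap.neg_apply,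
      inner_neg_right, sub_smul_inner] at h
    linarith
  have hgrow' : ⟪zt1 - zstar, Matrix.toEuclideanLin V' (zt1 - zstar)⟫
      ≤ (1 + δ) * ⟪zt1 - zstar, Matrix.toEuclideanLin V (zt1 - zstar)⟫ := by
    have h := psd_inner_nonneg _ hgrow (zt1 - zstar)
    rw [smul_sub_inner] at h
    linarith
  -- D ≤ P11
  have hΔ2 : ‖F zth - F zt‖ ^ 2 ≤ γ^2 * L^2 * ‖B (F zt)‖ ^ 2 := by
    have h := pow_le_pow_left₀ (norm_nonneg (F zth - F zt)) hΔ 2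
    linarith [h, sq_nonneg (L * (γ * ‖B (F zt)‖))]
  have hγL2 : γ^2 * L^2 ≤ e^2 / 16 := by nlinarith [hLγ, mul_pos hγ0 hL]
  have h1 : e * ⟪F zth - F zt, B (F zth - F zt)⟫ ≤ e^2/16 * ‖B (F zt)‖^2 := by
    linarith [mul_le_mul_of_nonneg_right hγL2 (sq_nonneg ‖B (F zt)‖),
      hBub (F zth - F zt), hΔ2]
  have h2 : e^2/16 * ‖B (F zt)‖^2 ≤ e/16 * ⟪F zt, B (F zt)⟫ := by
    have := mul_le_mul_of_nonneg_left (key_e (F zt)) (by positivity : (0:ℝ) ≤ e/16)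
    linarith
  have hDP : ⟪F zth - F zt, B (F zth - F zt)⟫ ≤ ⟪F zt, B (F zt)⟫ := by
    nlinarith [h1, h2, hP11, he]
  -- lower bound for ‖zth - zstar‖
  have hw1 : γ * ‖B (F zt)‖ ≤ ‖r‖ / 4 := by
    have h1 := mul_le_mul_of_nonneg_left (hBn (F zt)) hγ0.le
    have h2 := mul_le_mul_of_nonneg_left hg1 hγ0.le
    have h3 := mul_le_mul_of_nonneg_right hLγ (norm_nonneg r)
    exact le_of_mul_le_mul_left (by linarith : e * (γ * ‖B (F zt)‖) ≤ e * (‖r‖/4)) he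
  have ht2 : ‖r‖ ^ 2 ≤ 2 * ‖zth - zstar‖ ^ 2 := by
    have h9 : ‖r‖ - γ * ‖B (F zt)‖ ≤ ‖zth - zstar‖ := by
      have h := norm_sub_norm_le r (γ • B (F zt))
      rw [norm_smul, Real.norm_eq_abs, abs_of_pos hγ0] at h
      rw [hth]; exact h
    have h10 : (3/4) * ‖r‖ ≤ ‖zth - zstar‖ := by linarith
    nlinarith [h10, norm_nonneg r]
  -- assemble
  have h22 : γ^2 * (⟪F zth, B (F zth)⟫ - 2*⟪F zth, B (F zt)⟫) ≤ 0 :=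
    mul_nonpos_of_nonneg_of_nonpos (sq_nonneg γ) (by linarith)
  have hS : γ * (μ * ‖zth - zstar‖^2) ≤ γ * ⟪F zth, zth - zstar⟫ :=
    mul_le_mul_of_nonneg_left hmono hγ0.le
  have hrt : γ * μ * ‖r‖^2 ≤ γ * μ * (2 * ‖zth - zstar‖^2) :=
    mul_le_mul_of_nonneg_left ht2 (by positivity)
  have hXa : ⟪zt1 - zstar, Matrix.toEuclideanLin V (zt1 - zstar)⟫
      ≤ ⟪r, Matrix.toEuclideanLin V r⟫ - γ * μ * ‖r‖ ^ 2 := by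
    rw [hA, hB']
    linarith [h22, hS, hrt]
  have hfin : ⟪zt1 - zstar, Matrix.toEuclideanLin V (zt1 - zstar)⟫
      ≤ (1 - γ * μ / Γ) * ⟪r, Matrix.toEuclideanLin V r⟫ := by
    have hc : 0 ≤ γ * μ / Γ := by positivity
    have hgm : γ * μ / Γ * (Γ * ‖r‖^2) = γ * μ * ‖r‖^2 := by field_simp
    linarith [hXa, mul_le_mul_of_nonneg_left hΓr hc, hgm]
  have h1δ : (0:ℝ) ≤ 1 + δ := by linarith
  calc ⟪zt1 - zstar, Matrix.toEuclideanLin V' (zt1 - zstar)⟫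
      ≤ (1 + δ) * ⟪zt1 - zstar, Matrix.toEuclideanLin V (zt1 - zstar)⟫ := hgrow'
    _ ≤ (1 + δ) * ((1 - γ * μ / Γ) * ⟪r, Matrix.toEuclideanLin V r⟫) :=
        mul_le_mul_of_nonneg_left hfin h1δ
    _ = (1 - γ * μ / Γ) * (1 + δ) * ⟪r, Matrix.toEuclideanLin V r⟫ := by ring
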